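/- arXiv:1302.3157 — 2 statements merged into one kernel-verified Lean document; each statement's English description precedes it below -/
import Mathlib

section
/- In the type D Weyl group D_n (signed permutations of {1,...,n} changing an even number of signs), if v is the minimal-length representative of a positive coset of W_P\\W with v^{-1}(1) = n, and u is the maximal-length representative of a negative coset with u^{-1}(-1) = n, then u and v are not comparable in Bruhat order. -/
/-- `w` is a signed permutation of `{1,…,n}` (type `B` Weyl group element),
viewed inside `Equiv.Perm ℤ`: it is odd and fixes everything beyond `n`. -/
def IsSignedPerm (n : ℕ) (w : Equiv.Perm ℤ) : Prop :=
  (∀ x : ℤ, w (-x) = - w x) ∧ ∀ x : ℤ, (n : ℤ) < |x| → w x = x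

/-- The simple reflections of the hyperoctahedral group `Bₙ`:
for `i < n`, `sᵢ` swaps the values `i, i+1` (and `-i, -(i+1)`);
`sₙ` changes the sign of `n`. -/
def simpleB (n i : ℕ) : Equiv.Perm ℤ :=
  if i = n then Equiv.swap (n : ℤ) (-(n : ℤ))
  else Equiv.swap (i : ℤ) ((i : ℤ) + 1) * Equiv.swap (-(i : ℤ)) (-(i : ℤ) - 1)

/-- The parabolic subgroup `W_P` generated by `s₂, …, sₙ`. -/
def WP_B (n : ℕ) : Subgroup (Equiv.Perm ℤ) :=
  Subgroup.closure {g | ∃ i : ℕ, 2 ≤ i ∧ i ≤ n ∧ g = simpleB n i}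

/-- The type `B` length function. -/
noncomputable def lenB (n : ℕ) (w : Equiv.Perm ℤ) : ℕ :=
  ((Finset.Icc (1 : ℤ) (n : ℤ) ×ˢ Finset.Icc (1 : ℤ) (n : ℤ)).filter
    (fun p => p.1 < p.2 ∧ w p.2 < w p.1)).card +
  ((Finset.Icc (1 : ℤ) (n : ℤ) ×ˢ Finset.Icc (1 : ℤ) (n : ℤ)).filter
    (fun p => p.1 ≤ p.2 ∧ w p.1 + w p.2 < 0)).card

/-- Reflections of `Bₙ`: conjugates of simple reflections by group elements. -/
def IsReflB (n : ℕ) (t : Equiv.Perm ℤ) : Prop :=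
  ∃ g s : Equiv.Perm ℤ, IsSignedPerm n g ∧
    (∃ i : ℕ, 1 ≤ i ∧ i ≤ n ∧ s = simpleB n i) ∧ t = g * s * g⁻¹

/-- Bruhat order on `Bₙ`. -/
def BruhatLE_B (n : ℕ) : Equiv.Perm ℤ → Equiv.Perm ℤ → Prop :=
  Relation.ReflTransGen
    (fun a b => (∃ t, IsReflB n t ∧ b = t * a) ∧ lenB n a < lenB n b)

/-- `v` is a minimal length representative of its left coset `W_P v`. -/
def IsMinRepB (n : ℕ) (v : Equiv.Perm ℤ) : Prop :=
  IsSignedPerm n v ∧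
    ∀ w : Equiv.Perm ℤ, IsSignedPerm n w → w * v⁻¹ ∈ WP_B n → lenB n v ≤ lenB n w

/-- `u` is a maximal length representative of its left coset `W_P u`. -/
def IsMaxRepB (n : ℕ) (u : Equiv.Perm ℤ) : Prop :=
  IsSignedPerm n u ∧
    ∀ w : Equiv.Perm ℤ, IsSignedPerm n w → w * u⁻¹ ∈ WP_B n → lenB n w ≤ lenB n u

/-- `w` is a type `D` signed permutation: a signed permutation with an even
number of negative entries. -/
def IsSignedPermD (n : ℕ) (w : Equiv.Perm ℤ) : Prop :=
  IsSignedPerm n w ∧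
    Even (((Finset.Icc (1 : ℤ) (n : ℤ)).filter (fun i => w i < 0)).card)

/-- The simple reflections of the type `D` Weyl group `Dₙ`:
for `i < n`, `sᵢ` swaps the values `i, i+1` (and `-i, -(i+1)`);
`sₙ` sends `n-1 ↦ -n` and `n ↦ -(n-1)`. -/
def simpleD (n i : ℕ) : Equiv.Perm ℤ :=
  if i = n then
    Equiv.swap ((n : ℤ) - 1) (-(n : ℤ)) * Equiv.swap (n : ℤ) (-(n : ℤ) + 1)
  else Equiv.swap (i : ℤ) ((i : ℤ) + 1) * Equiv.swap (-(i : ℤ)) (-(i : ℤ) - 1)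

/-- The parabolic subgroup `W_P` of `Dₙ` generated by all simple reflections
except the one corresponding to the simple root `x₁ - x₂`. -/
def WP_D (n : ℕ) : Subgroup (Equiv.Perm ℤ) :=
  Subgroup.closure {g | ∃ i : ℕ, 2 ≤ i ∧ i ≤ n ∧ g = simpleD n i}

/-- The type `D` length function. -/
noncomputable def lenD (n : ℕ) (w : Equiv.Perm ℤ) : ℕ :=
  ((Finset.Icc (1 : ℤ) (n : ℤ) ×ˢ Finset.Icc (1 : ℤ) (n : ℤ)).filter
    (fun p => p.1 < p.2 ∧ w p.2 < w p.1)).card +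
  ((Finset.Icc (1 : ℤ) (n : ℤ) ×ˢ Finset.Icc (1 : ℤ) (n : ℤ)).filter
    (fun p => p.1 < p.2 ∧ w p.1 + w p.2 < 0)).card

/-- Reflections of `Dₙ`: conjugates of simple reflections by group elements. -/
def IsReflD (n : ℕ) (t : Equiv.Perm ℤ) : Prop :=
  ∃ g s : Equiv.Perm ℤ, IsSignedPermD n g ∧
    (∃ i : ℕ, 1 ≤ i ∧ i ≤ n ∧ s = simpleD n i) ∧ t = g * s * g⁻¹

/-- Bruhat order on `Dₙ`. -/
def BruhatLE_D (n : ℕ) : Equiv.Perm ℤ → Equiv.Perm ℤ → Prop :=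
  Relation.ReflTransGen
    (fun a b => (∃ t, IsReflD n t ∧ b = t * a) ∧ lenD n a < lenD n b)

/-- `v` is a minimal length representative of its left coset `W_P v` in `Dₙ`. -/
def IsMinRepD (n : ℕ) (v : Equiv.Perm ℤ) : Prop :=
  IsSignedPermD n v ∧
    ∀ w : Equiv.Perm ℤ, IsSignedPermD n w → w * v⁻¹ ∈ WP_D n → lenD n v ≤ lenD n w

/-- `u` is a maximal length representative of its left coset `W_P u` in `Dₙ`. -/
def IsMaxRepD (n : ℕ) (u : Equiv.Perm ℤ) : Prop :=
  IsSignedPermD n u ∧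
    ∀ w : Equiv.Perm ℤ, IsSignedPermD n w → w * u⁻¹ ∈ WP_D n → lenD n w ≤ lenD n u

open Equiv

/-- Structural form of type-D reflections. -/
def StructP (n : ℕ) (t : Equiv.Perm ℤ) : Prop :=
  ∃ c d : ℤ, c ≠ 0 ∧ d ≠ 0 ∧ c ≠ d ∧ c ≠ -d ∧ |c| ≤ (n : ℤ) ∧ |d| ≤ (n : ℤ) ∧
    t = Equiv.swap c d * Equiv.swap (-c) (-d)

lemma tval (c d : ℤ) (h0c : c ≠ 0) (h0d : d ≠ 0) (hcd : c ≠ d) (hcnd : c ≠ -d) (x : ℤ) :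
    (Equiv.swap c d * Equiv.swap (-c) (-d)) x =
      if x = c then d else if x = d then c else if x = -c then -d else if x = -d then -c else x := by
  simp only [Equiv.Perm.mul_apply, Equiv.swap_apply_def]
  split_ifs <;> omega

lemma swap2_comm (c d : ℤ) (h0c : c ≠ 0) (h0d : d ≠ 0) (hcnd : c ≠ -d) :
    Equiv.swap c d * Equiv.swap (-c) (-d) = Equiv.swap (-c) (-d) * Equiv.swap c d := by
  ext x
  simp only [Equiv.Perm.mul_apply, Equiv.swap_apply_def]
  split_ifs <;> omega

lemma struct_norm {n : ℕ} {t : Equiv.Perm ℤ} (ht : StructP n t) {z : ℤ} (hz : t z ≠ z) :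
    ∃ e : ℤ, z ≠ 0 ∧ e ≠ 0 ∧ z ≠ e ∧ z ≠ -e ∧ |z| ≤ (n : ℤ) ∧ |e| ≤ (n : ℤ) ∧
      t = Equiv.swap z e * Equiv.swap (-z) (-e) ∧ t z = e := by
  obtain ⟨c, d, h0c, h0d, hcd, hcnd, hbc, hbd, rfl⟩ := ht
  have hv := tval c d h0c h0d hcd hcnd z
  by_cases h1 : z = c
  · subst h1
    refine ⟨d, h0c, h0d, hcd, hcnd, hbc, hbd, rfl, ?_⟩
    rw [hv]; split_ifs <;> omega
  · by_cases h2 : z = d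
    · subst h2
      refine ⟨c, h0d, h0c, by omega, by omega, hbd, hbc, ?_, ?_⟩
      · rw [Equiv.swap_comm z c]
        have : -z ≠ -c := fun h => hcd (by omega)
        rw [Equiv.swap_comm (-z) (-c)]
      · rw [hv]; split_ifs <;> omega
    · by_cases h3 : z = -c
      · subst h3
        refine ⟨-d, by omega, by omega, by omega, by omega, by simpa using hbc, by simpa using hbd, ?_, ?_⟩
        · rw [show -(-c) = c by ring, show -(-d) = d by ring, ← swap2_comm c d h0c h0d hcnd]
        · rw [hv]; split_ifs <;> omega
      · by_cases h4 : z = -d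
        · subst h4
          refine ⟨-c, by omega, by omega, by omega, by omega, by simpa using hbd, by simpa using hbc, ?_, ?_⟩
          · rw [show -(-d) = d by ring, show -(-c) = c by ring]
            rw [Equiv.swap_comm (-d) (-c), Equiv.swap_comm d c, ← swap2_comm c d h0c h0d hcnd]
          · rw [hv]; split_ifs <;> omega
        · exfalso; apply hz; rw [hv]; simp only [if_neg h1, if_neg h2, if_neg h3, if_neg h4]

lemma lemS (n : ℕ) (a b : Equiv.Perm ℤ) (i : ℤ) (h1 : 1 ≤ i) (h2 : i < (n : ℤ))
    (hbi : b i = a n) (hbn : b (n : ℤ) = a i)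
    (hagree : ∀ k : ℤ, 1 ≤ k → k ≤ (n : ℤ) → k ≠ i → k ≠ (n : ℤ) → b k = a k)
    (hlt : a (n : ℤ) < a i) : lenD n b ≤ lenD n a := by
  classical
  unfold lenD
  have hn1 : (1 : ℤ) ≤ (n : ℤ) := by omega
  apply Nat.add_le_add
  · -- inversions
    apply Finset.card_le_card_of_injOn
      (fun p => if p.2 = i ∧ p.1 < i then (p.1, (n : ℤ))
        else if p.2 = (n : ℤ) ∧ p.1 < i then (p.1, i) else p)
    · intro p hp
      rw [Finset.mem_coe] at hp ⊢
      beta_reduce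
      simp only [Finset.mem_filter, Finset.mem_product, Finset.mem_Icc] at hp
      obtain ⟨⟨⟨hp11, hp12⟩, hp21, hp22⟩, hord, hval⟩ := hp
      split_ifs with hA hB
      · obtain ⟨hA1, hA2⟩ := hA
        have e1 : b p.1 = a p.1 := hagree p.1 hp11 hp12 (by omega) (by omega)
        have e2 : b p.2 = a (n : ℤ) := by rw [hA1, hbi]
        rw [e1, e2] at hval
        simp only [Finset.mem_filter, Finset.mem_product, Finset.mem_Icc]
        refine ⟨⟨⟨by omega, by omega⟩, by omega, by omega⟩, by omega, by omega⟩
      · obtain ⟨hB1, hB2⟩ := hB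
        have e1 : b p.1 = a p.1 := hagree p.1 hp11 hp12 (by omega) (by omega)
        have e2 : b p.2 = a i := by rw [hB1, hbn]
        rw [e1, e2] at hval
        simp only [Finset.mem_filter, Finset.mem_product, Finset.mem_Icc]
        refine ⟨⟨⟨by omega, by omega⟩, by omega, by omega⟩, by omega, by omega⟩
      · push_neg at hA hB
        simp only [Finset.mem_filter, Finset.mem_product, Finset.mem_Icc]
        refine ⟨⟨⟨hp11, hp12⟩, hp21, hp22⟩, hord, ?_⟩
        by_cases hp2i : p.2 = i
        · omega
        · by_cases hp2n : p.2 = (n : ℤ)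
          · have hi1 : i ≤ p.1 := hB hp2n
            by_cases hp1i : p.1 = i
            · rw [hp1i, hp2n, hbi, hbn] at hval; omega
            · have e1 : b p.1 = a p.1 := hagree p.1 hp11 hp12 hp1i (by omega)
              rw [hp2n, hbn, e1] at hval
              rw [hp2n]; omega
          · have e2 : b p.2 = a p.2 := hagree p.2 hp21 hp22 hp2i hp2n
            by_cases hp1i : p.1 = i
            · rw [hp1i, hbi, e2] at hval; rw [hp1i]; omega
            · have e1 : b p.1 = a p.1 := hagree p.1 hp11 hp12 hp1i (by omega)
              rw [e1, e2] at hval; omega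
    · -- injectivity via involution
      have invol : ∀ p : ℤ × ℤ,
          (fun p : ℤ × ℤ => if p.2 = i ∧ p.1 < i then (p.1, (n : ℤ))
            else if p.2 = (n : ℤ) ∧ p.1 < i then (p.1, i) else p)
          ((fun p : ℤ × ℤ => if p.2 = i ∧ p.1 < i then (p.1, (n : ℤ))
            else if p.2 = (n : ℤ) ∧ p.1 < i then (p.1, i) else p) p) = p := by
        rintro ⟨p1, p2⟩
        dsimp only
        split_ifs <;> (try dsimp only at *) <;> (try simp_all only [Prod.mk.injEq, not_and, not_lt, eq_self_iff_true, true_and, not_true, false_and, and_false, not_false_iff, forall_const]) <;> try omega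
      intro p _ q _ h
      have hq := invol p
      rw [h, invol q] at hq
      exact hq.symm
  · -- negative pairs
    apply Finset.card_le_card_of_injOn
      (fun p => if p.2 = i ∧ p.1 < i then (p.1, (n : ℤ))
        else if p.2 = (n : ℤ) ∧ p.1 < i then (p.1, i)
        else if p.1 = i ∧ p.2 < (n : ℤ) then (p.2, (n : ℤ))
        else if p.2 = (n : ℤ) ∧ i < p.1 then (i, p.1) else p)
    · intro p hp
      rw [Finset.mem_coe] at hp ⊢
      beta_reduce
      simp only [Finset.mem_filter, Finset.mem_product, Finset.mem_Icc] at hp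
      obtain ⟨⟨⟨hp11, hp12⟩, hp21, hp22⟩, hord, hval⟩ := hp
      split_ifs with hA hB hC hD
      · obtain ⟨hA1, hA2⟩ := hA
        have e1 : b p.1 = a p.1 := hagree p.1 hp11 hp12 (by omega) (by omega)
        have e2 : b p.2 = a (n : ℤ) := by rw [hA1, hbi]
        rw [e1, e2] at hval
        simp only [Finset.mem_filter, Finset.mem_product, Finset.mem_Icc]
        refine ⟨⟨⟨by omega, by omega⟩, by omega, by omega⟩, by omega, by omega⟩
      · obtain ⟨hB1, hB2⟩ := hB
        have e1 : b p.1 = a p.1 := hagree p.1 hp11 hp12 (by omega) (by omega)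
        have e2 : b p.2 = a i := by rw [hB1, hbn]
        rw [e1, e2] at hval
        simp only [Finset.mem_filter, Finset.mem_product, Finset.mem_Icc]
        refine ⟨⟨⟨by omega, by omega⟩, by omega, by omega⟩, by omega, by omega⟩
      · obtain ⟨hC1, hC2⟩ := hC
        have e2 : b p.2 = a p.2 := hagree p.2 hp21 hp22 (by omega) (by omega)
        have e1 : b p.1 = a (n : ℤ) := by rw [hC1, hbi]
        rw [e1, e2] at hval
        simp only [Finset.mem_filter, Finset.mem_product, Finset.mem_Icc]
        refine ⟨⟨⟨by omega, by omega⟩, by omega, by omega⟩, by omega, by omega⟩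
      · obtain ⟨hD1, hD2⟩ := hD
        have e1 : b p.1 = a p.1 := hagree p.1 hp11 hp12 (by omega) (by omega)
        have e2 : b p.2 = a i := by rw [hD1, hbn]
        rw [e1, e2] at hval
        simp only [Finset.mem_filter, Finset.mem_product, Finset.mem_Icc]
        refine ⟨⟨⟨by omega, by omega⟩, by omega, by omega⟩, by omega, by omega⟩
      · push_neg at hA hB hC hD
        simp only [Finset.mem_filter, Finset.mem_product, Finset.mem_Icc]
        refine ⟨⟨⟨hp11, hp12⟩, hp21, hp22⟩, hord, ?_⟩
        by_cases hp2i : p.2 = i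
        · omega
        · by_cases hp1i : p.1 = i
          · have hp2n : p.2 = (n : ℤ) := by
              have := hC hp1i; omega
            rw [hp1i, hp2n, hbi, hbn] at hval
            rw [hp1i, hp2n]; omega
          · by_cases hp2n : p.2 = (n : ℤ)
            · have := hD hp2n
              omega
            · have e1 : b p.1 = a p.1 := hagree p.1 hp11 hp12 hp1i (by omega)
              have e2 : b p.2 = a p.2 := hagree p.2 hp21 hp22 hp2i hp2n
              rw [e1, e2] at hval; omega
    · -- injectivity: involution on pairs with p.1 < p.2
      set f : ℤ × ℤ → ℤ × ℤ := fun p => if p.2 = i ∧ p.1 < i then (p.1, (n : ℤ))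
        else if p.2 = (n : ℤ) ∧ p.1 < i then (p.1, i)
        else if p.1 = i ∧ p.2 < (n : ℤ) then (p.2, (n : ℤ))
        else if p.2 = (n : ℤ) ∧ i < p.1 then (i, p.1) else p with hf
      have invol : ∀ p : ℤ × ℤ, p.1 < p.2 → f (f p) = p := by
        rintro ⟨p1, p2⟩ hord
        simp only [hf]
        split_ifs <;> (try dsimp only at *) <;> (try simp_all only [Prod.mk.injEq, not_and, not_lt, eq_self_iff_true, true_and, not_true, false_and, and_false, not_false_iff, forall_const]) <;> try omega
      intro p hp q hq h
      simp only [Finset.coe_filter, Set.mem_setOf_eq, Finset.mem_product] at hp hq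
      have h1p := invol p hp.2.1
      rw [h, invol q hq.2.1] at h1p
      exact h1p.symm

/-- "Mixed" move at window positions `i < n`: entries `(a i, a n)` are replaced by
`(-(a n), -(a i))`, both strictly increasing (`a n + a i < 0`). Then `lenD b ≤ lenD a`. -/
lemma lemM (n : ℕ) (a b : Equiv.Perm ℤ) (i : ℤ) (h1 : 1 ≤ i) (h2 : i < (n : ℤ))
    (hbi : b i = -(a n)) (hbn : b (n : ℤ) = -(a i))
    (hagree : ∀ k : ℤ, 1 ≤ k → k ≤ (n : ℤ) → k ≠ i → k ≠ (n : ℤ) → b k = a k)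
    (hsum : a (n : ℤ) + a i < 0) : lenD n b ≤ lenD n a := by
  classical
  unfold lenD
  have hn1 : (1 : ℤ) ≤ (n : ℤ) := by omega
  rw [← Finset.card_disjSum, ← Finset.card_disjSum]
  apply Finset.card_le_card_of_injOn
    (Sum.elim
      (fun p : ℤ × ℤ => if p.1 = i ∧ a i ≤ a p.2 ∧ p.2 < (n : ℤ)
        then (Sum.inr (p.2, (n : ℤ)) : (ℤ × ℤ) ⊕ (ℤ × ℤ)) else Sum.inl p)
      (fun p : ℤ × ℤ => (Sum.inr p : (ℤ × ℤ) ⊕ (ℤ × ℤ))))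
  · rintro (p | p) hu <;> rw [Finset.mem_coe] at hu ⊢
    · rw [Finset.inl_mem_disjSum] at hu
      simp only [Finset.mem_filter, Finset.mem_product, Finset.mem_Icc] at hu
      obtain ⟨⟨⟨hp11, hp12⟩, hp21, hp22⟩, hord, hval⟩ := hu
      simp only [Sum.elim_inl]
      split_ifs with hS
      · obtain ⟨hS1, hS2, hS3⟩ := hS
        have e2 : b p.2 = a p.2 := hagree p.2 hp21 hp22 (by omega) (by omega)
        have e1 : b p.1 = -(a (n : ℤ)) := by rw [hS1, hbi]
        rw [e1, e2] at hval
        rw [Finset.inr_mem_disjSum]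
        simp only [Finset.mem_filter, Finset.mem_product, Finset.mem_Icc]
        refine ⟨⟨⟨by omega, by omega⟩, by omega, by omega⟩, by omega, by omega⟩
      · push_neg at hS
        rw [Finset.inl_mem_disjSum]
        simp only [Finset.mem_filter, Finset.mem_product, Finset.mem_Icc]
        refine ⟨⟨⟨hp11, hp12⟩, hp21, hp22⟩, hord, ?_⟩
        by_cases hp1i : p.1 = i
        · by_cases hp2n : p.2 = (n : ℤ)
          · rw [hp1i, hp2n, hbn, hbi] at hval
            rw [hp1i, hp2n]; omega
          · have hlt : a p.2 < a i := by
              rcases lt_or_ge (a p.2) (a i) with h | h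
              · exact h
              · exact absurd (hS hp1i h) (by omega)
            rw [hp1i]; omega
        · have e1 : b p.1 = a p.1 := hagree p.1 hp11 hp12 hp1i (by omega)
          by_cases hp2i : p.2 = i
          · rw [hp2i, hbi, e1] at hval
            rw [hp2i]; omega
          · by_cases hp2n : p.2 = (n : ℤ)
            · rw [hp2n, hbn, e1] at hval
              rw [hp2n]; omega
            · have e2 : b p.2 = a p.2 := hagree p.2 hp21 hp22 hp2i hp2n
              rw [e1, e2] at hval; omega
    · rw [Finset.inr_mem_disjSum] at hu
      simp only [Finset.mem_filter, Finset.mem_product, Finset.mem_Icc] at hu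
      obtain ⟨⟨⟨hp11, hp12⟩, hp21, hp22⟩, hord, hval⟩ := hu
      simp only [Sum.elim_inr]
      rw [Finset.inr_mem_disjSum]
      simp only [Finset.mem_filter, Finset.mem_product, Finset.mem_Icc]
      refine ⟨⟨⟨hp11, hp12⟩, hp21, hp22⟩, hord, ?_⟩
      by_cases hp1i : p.1 = i
      · by_cases hp2n : p.2 = (n : ℤ)
        · rw [hp1i, hp2n, hbi, hbn] at hval; omega
        · have e2 : b p.2 = a p.2 := hagree p.2 hp21 hp22 (by omega) hp2n
          rw [hp1i, hbi, e2] at hval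
          rw [hp1i]; omega
      · have e1 : b p.1 = a p.1 := hagree p.1 hp11 hp12 hp1i (by omega)
        by_cases hp2i : p.2 = i
        · rw [hp2i, hbi, e1] at hval
          rw [hp2i]; omega
        · by_cases hp2n : p.2 = (n : ℤ)
          · rw [hp2n, hbn, e1] at hval
            rw [hp2n]; omega
          · have e2 : b p.2 = a p.2 := hagree p.2 hp21 hp22 hp2i hp2n
            rw [e1, e2] at hval; omega
  · -- injectivity
    rintro (p | p) hu (q | q) hv h
    · simp only [Sum.elim_inl] at h
      by_cases hSp : p.1 = i ∧ a i ≤ a p.2 ∧ p.2 < (n : ℤ)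
      · rw [if_pos hSp] at h
        by_cases hSq : q.1 = i ∧ a i ≤ a q.2 ∧ q.2 < (n : ℤ)
        · rw [if_pos hSq] at h
          simp only [Sum.inr.injEq, Prod.mk.injEq] at h
          have : p = q := Prod.ext (by rw [hSp.1, hSq.1]) h.1
          rw [this]
        · rw [if_neg hSq] at h
          exact absurd h (by simp)
      · rw [if_neg hSp] at h
        by_cases hSq : q.1 = i ∧ a i ≤ a q.2 ∧ q.2 < (n : ℤ)
        · rw [if_pos hSq] at h
          exact absurd h (by simp)
        · rw [if_neg hSq] at h
          simp only [Sum.inl.injEq] at h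
          rw [h]
    · simp only [Sum.elim_inl, Sum.elim_inr] at h
      by_cases hSp : p.1 = i ∧ a i ≤ a p.2 ∧ p.2 < (n : ℤ)
      · rw [if_pos hSp] at h
        simp only [Sum.inr.injEq] at h
        exfalso
        rw [Finset.mem_coe, Finset.inl_mem_disjSum] at hu
        rw [Finset.mem_coe, Finset.inr_mem_disjSum] at hv
        simp only [Finset.mem_filter, Finset.mem_product, Finset.mem_Icc] at hu hv
        obtain ⟨⟨⟨hp11, hp12⟩, hp21, hp22⟩, hord, hval⟩ := hu
        obtain ⟨_, hordq, hvalq⟩ := hv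
        rw [← h] at hvalq
        have e2 : b p.2 = a p.2 := hagree p.2 hp21 hp22 (by omega) (by omega)
        rw [e2, hbn] at hvalq
        have := hSp.2.1
        omega
      · rw [if_neg hSp] at h
        exact absurd h (by simp)
    · simp only [Sum.elim_inl, Sum.elim_inr] at h
      by_cases hSq : q.1 = i ∧ a i ≤ a q.2 ∧ q.2 < (n : ℤ)
      · rw [if_pos hSq] at h
        simp only [Sum.inr.injEq] at h
        exfalso
        rw [Finset.mem_coe, Finset.inr_mem_disjSum] at hu
        rw [Finset.mem_coe, Finset.inl_mem_disjSum] at hv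
        simp only [Finset.mem_filter, Finset.mem_product, Finset.mem_Icc] at hu hv
        obtain ⟨_, hordp, hvalp⟩ := hu
        obtain ⟨⟨⟨hq11, hq12⟩, hq21, hq22⟩, hordq, hvalq⟩ := hv
        rw [h] at hvalp
        have e2 : b q.2 = a q.2 := hagree q.2 hq21 hq22 (by omega) (by omega)
        rw [e2, hbn] at hvalp
        have := hSq.2.1
        omega
      · rw [if_neg hSq] at h
        exact absurd h (by simp)
    · simpa using h

lemma sp_zero {n : ℕ} {a : Equiv.Perm ℤ} (ha : IsSignedPerm n a) : a 0 = 0 := by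
  have h := ha.1 0
  rw [neg_zero] at h
  omega

lemma sp_ball {n : ℕ} {g : Equiv.Perm ℤ} (hg : IsSignedPerm n g) {x : ℤ}
    (hx : |x| ≤ (n : ℤ)) : |g x| ≤ (n : ℤ) := by
  by_contra h
  push_neg at h
  have h2 : g (g x) = g x := hg.2 (g x) h
  have h3 : g x = x := g.injective h2
  rw [h3] at h
  omega

lemma struct_signed {n : ℕ} {t : Equiv.Perm ℤ} (ht : StructP n t) : IsSignedPerm n t := by
  obtain ⟨c, d, h0c, h0d, hcd, hcnd, hbc, hbd, rfl⟩ := ht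
  constructor
  · intro x
    rw [tval c d h0c h0d hcd hcnd, tval c d h0c h0d hcd hcnd]
    split_ifs <;> omega
  · intro x hx
    have hc := abs_le.mp hbc
    have hd := abs_le.mp hbd
    have hx' : x < -(n : ℤ) ∨ (n : ℤ) < x := by
      rcases abs_cases x with ⟨h1, _⟩ | ⟨h1, _⟩ <;> omega
    rw [tval c d h0c h0d hcd hcnd]
    rcases hx' with h | h <;> (split_ifs <;> omega)

lemma signed_mul {n : ℕ} {t a : Equiv.Perm ℤ} (ht : IsSignedPerm n t)
    (ha : IsSignedPerm n a) : IsSignedPerm n (t * a) := by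
  constructor
  · intro x
    simp only [Equiv.Perm.mul_apply, ha.1 x, ht.1 (a x)]
  · intro x hx
    simp only [Equiv.Perm.mul_apply, ha.2 x hx, ht.2 x hx]

lemma conj_swap (g : Equiv.Perm ℤ) (x y : ℤ) :
    g * Equiv.swap x y * g⁻¹ = Equiv.swap (g x) (g y) :=
  (Equiv.swap_apply_apply g x y).symm

lemma refl_structure {n : ℕ} (hn : 2 ≤ n) {t : Equiv.Perm ℤ} (ht : IsReflD n t) :
    StructP n t := by
  obtain ⟨g, s, hg, ⟨i0, hi1, hi2, hs⟩, rfl⟩ := ht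
  have hgs : IsSignedPerm n g := hg.1
  have hg0 : g 0 = 0 := sp_zero hgs
  have hginj := g.injective
  by_cases hin : i0 = n
  · subst hin
    have hsval : s = Equiv.swap ((i0 : ℤ) - 1) (-(i0 : ℤ)) *
        Equiv.swap (-((i0 : ℤ) - 1)) (-(-(i0 : ℤ))) := by
      rw [hs, simpleD, if_pos rfl]
      congr 1
      rw [Equiv.swap_comm]
      congr 1 <;> ring
    refine ⟨g ((i0 : ℤ) - 1), g (-(i0 : ℤ)), ?_, ?_, ?_, ?_, ?_, ?_, ?_⟩
    · intro h; have := hginj (h.trans hg0.symm); omega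
    · intro h; have := hginj (h.trans hg0.symm); omega
    · intro h; have := hginj h; omega
    · intro h
      rw [← hgs.1 (-(i0:ℤ))] at h
      have := hginj h; omega
    · exact sp_ball hgs (by rw [abs_le]; omega)
    · exact sp_ball hgs (by rw [abs_le]; omega)
    · rw [hsval, mul_assoc, ← mul_assoc g _ _]
      rw [show g * (Equiv.swap ((i0:ℤ)-1) (-(i0:ℤ)) * Equiv.swap (-((i0:ℤ)-1)) (-(-(i0:ℤ)))) * g⁻¹
          = (g * Equiv.swap ((i0:ℤ)-1) (-(i0:ℤ)) * g⁻¹) *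
            (g * Equiv.swap (-((i0:ℤ)-1)) (-(-(i0:ℤ))) * g⁻¹) by group]
      rw [conj_swap, conj_swap, hgs.1 ((i0:ℤ)-1), hgs.1 (-(i0:ℤ))]
  · have hsval : s = Equiv.swap (i0 : ℤ) ((i0 : ℤ) + 1) *
        Equiv.swap (-(i0 : ℤ)) (-((i0 : ℤ) + 1)) := by
      rw [hs, simpleD, if_neg hin]
      congr 1
      congr 1
      ring
    have hi2' : i0 + 1 ≤ n := by omega
    refine ⟨g (i0 : ℤ), g ((i0 : ℤ) + 1), ?_, ?_, ?_, ?_, ?_, ?_, ?_⟩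
    · intro h; have := hginj (h.trans hg0.symm)
      have : (i0 : ℤ) = 0 := this
      omega
    · intro h; have := hginj (h.trans hg0.symm)
      have : (i0 : ℤ) + 1 = 0 := this
      omega
    · intro h; have := hginj h; omega
    · intro h
      rw [← hgs.1 ((i0:ℤ)+1)] at h
      have := hginj h; omega
    · refine sp_ball hgs (by rw [abs_le]; constructor <;> [omega; exact_mod_cast hi2])
    · refine sp_ball hgs (by rw [abs_le]; constructor <;> [omega; exact_mod_cast hi2'])
    · rw [hsval]
      rw [show g * (Equiv.swap (i0:ℤ) ((i0:ℤ)+1) * Equiv.swap (-(i0:ℤ)) (-((i0:ℤ)+1))) * g⁻¹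
          = (g * Equiv.swap (i0:ℤ) ((i0:ℤ)+1) * g⁻¹) *
            (g * Equiv.swap (-(i0:ℤ)) (-((i0:ℤ)+1)) * g⁻¹) by group]
      rw [conj_swap, conj_swap, hgs.1, hgs.1]

lemma key {n : ℕ} {a t : Equiv.Perm ℤ} (ha : IsSignedPerm n a)
    (ht : StructP n t) (hmove : t (a (n : ℤ)) ≠ a (n : ℤ))
    (hlt : a (n : ℤ) < t (a (n : ℤ))) : lenD n (t * a) ≤ lenD n a := by
  obtain ⟨e, hz0, he0, hze, hzne, hzb, heb, hteq, htz⟩ := struct_norm ht hmove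
  have tA : ∀ x : ℤ, t x = if x = a (n:ℤ) then e else if x = e then a (n:ℤ)
      else if x = -(a (n:ℤ)) then -e else if x = -e then -(a (n:ℤ)) else x := by
    intro x
    rw [hteq]
    exact tval _ e hz0 he0 hze hzne x
  have ha0 : a 0 = 0 := sp_zero ha
  have hainj := a.injective
  set q := a.symm e with hqdef
  have haq : a q = e := a.apply_symm_apply e
  have hq0 : q ≠ 0 := by
    intro h; rw [h, ha0] at haq; omega
  have hqb : |q| ≤ (n : ℤ) := by
    by_contra h
    push_neg at h
    have := ha.2 q h
    rw [this] at haq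
    rw [← haq] at heb
    omega
  have hqn : q ≠ (n : ℤ) := by
    intro h; rw [h] at haq; omega
  have hqnn : q ≠ -(n : ℤ) := by
    intro h
    rw [h] at haq
    have : a (-(n:ℤ)) = -(a (n:ℤ)) := ha.1 (n : ℤ)
    omega
  have habs := abs_le.mp hqb
  have hn1 : (1 : ℤ) ≤ (n : ℤ) := by
    have := abs_le.mp hzb
    have : a (n:ℤ) ≠ 0 := hz0
    omega
  have hagree : ∀ k : ℤ, 1 ≤ k → k ≤ (n : ℤ) → k ≠ |q| → k ≠ (n : ℤ) → (t * a) k = a k := by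
    intro k hk1 hk2 hkq hkn
    rw [Equiv.Perm.mul_apply, tA]
    have h1 : a k ≠ a (n : ℤ) := fun h => hkn (hainj h)
    have h2 : a k ≠ e := by
      intro h; rw [← haq] at h
      have := hainj h
      rcases abs_cases q with ⟨hh, _⟩ | ⟨hh, _⟩ <;> omega
    have h3 : a k ≠ -(a (n:ℤ)) := by
      intro h
      rw [← ha.1 (n:ℤ)] at h
      have := hainj h
      omega
    have h4 : a k ≠ -e := by
      intro h
      rw [← haq, ← ha.1 q] at h
      have := hainj h
      rcases abs_cases q with ⟨hh, _⟩ | ⟨hh, _⟩ <;> omega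
    rw [if_neg h1, if_neg h2, if_neg h3, if_neg h4]
  have hbn : (t * a) (n : ℤ) = e := by
    rw [Equiv.Perm.mul_apply, htz]
  rcases lt_or_gt_of_ne hq0 with hqneg | hqpos
  · -- M case : i = -q
    apply lemM n a (t * a) (-q) (by omega) (by omega)
    · rw [Equiv.Perm.mul_apply]
      have : a (-q) = -e := by rw [ha.1 q, haq]
      rw [this, tA]
      rw [if_neg (by omega), if_neg (by omega), if_neg (by omega), if_pos rfl]
    · rw [hbn]
      rw [ha.1 q, haq]
      ring
    · intro k hk1 hk2 hki hkn
      have : |q| = -q := by rcases abs_cases q with ⟨h, _⟩ | ⟨h, _⟩ <;> omega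
      exact hagree k hk1 hk2 (by omega) hkn
    · rw [ha.1 q, haq]
      rw [htz] at hlt
      omega
  · -- S case : i = q
    apply lemS n a (t * a) q (by omega) (by omega)
    · rw [Equiv.Perm.mul_apply, haq, tA]
      rw [if_neg (by omega), if_pos rfl]
    · rw [hbn, haq]
    · intro k hk1 hk2 hki hkn
      have : |q| = q := by rcases abs_cases q with ⟨h, _⟩ | ⟨h, _⟩ <;> omega
      exact hagree k hk1 hk2 (by omega) hkn
    · rw [haq]
      rw [htz] at hlt
      exact hlt

lemma step_pres {n : ℕ} (hn : 2 ≤ n) {a b : Equiv.Perm ℤ} (ha : IsSignedPerm n a)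
    (hstep : (∃ t, IsReflD n t ∧ b = t * a) ∧ lenD n a < lenD n b) :
    IsSignedPerm n b ∧ b (n : ℤ) ≤ a (n : ℤ) ∧
      (b (n : ℤ) = a (n : ℤ) ∨
        (b (n : ℤ) < a (n : ℤ) ∧ b (n : ℤ) ≠ 0 ∧ ¬(a (n : ℤ) = 1 ∧ b (n : ℤ) = -1))) := by
  obtain ⟨⟨t, htr, rfl⟩, hlen⟩ := hstep
  have hts : StructP n t := refl_structure hn htr
  have hsigned : IsSignedPerm n (t * a) := signed_mul (struct_signed hts) ha
  have hbn : (t * a) (n : ℤ) = t (a (n : ℤ)) := Equiv.Perm.mul_apply t a _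
  by_cases hm : t (a (n : ℤ)) = a (n : ℤ)
  · exact ⟨hsigned, by rw [hbn, hm], Or.inl (by rw [hbn, hm])⟩
  · have hnotlt : ¬ (a (n : ℤ) < t (a (n : ℤ))) := by
      intro hlt
      have := key ha hts hm hlt
      omega
    obtain ⟨e, hz0, he0, hze, hzne, hzb, heb, hteq, htz⟩ := struct_norm hts hm
    refine ⟨hsigned, by omega, Or.inr ⟨by omega, ?_, ?_⟩⟩
    · rw [hbn, htz]; exact he0
    · rintro ⟨h1, h2⟩
      rw [hbn, htz] at h2
      rw [h1] at hzne
      omega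

/-- in `Dₙ`, if `v` is the minimal-length representative of a
positive coset with `v⁻¹(1) = n`, and `u` is the maximal-length representative
of a negative coset with `u⁻¹(-1) = n`, then `u` and `v` are incomparable in
Bruhat order. -/
theorem typeD_incomparable (n : ℕ) (hn : 2 ≤ n) (u v : Equiv.Perm ℤ)
    (hu : IsMaxRepD n u) (hv : IsMinRepD n v)
    (hvpos : v.symm 1 = (n : ℤ)) (huneg : u.symm (-1) = (n : ℤ)) :
    ¬ BruhatLE_D n v u ∧ ¬ BruhatLE_D n u v := by
  have hus : IsSignedPerm n u := hu.1.1
  have hvs : IsSignedPerm n v := hv.1.1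
  have hvn : v (n : ℤ) = 1 := by
    rw [← hvpos]; exact v.apply_symm_apply 1
  have hun : u (n : ℤ) = -1 := by
    rw [← huneg]; exact u.apply_symm_apply (-1)
  constructor
  · intro h
    have main : ∀ w : Equiv.Perm ℤ, BruhatLE_D n v w →
        IsSignedPerm n w ∧ (w (n : ℤ) = 1 ∨ w (n : ℤ) ≤ -2) := by
      intro w hw
      unfold BruhatLE_D at hw
      induction hw with
      | refl => exact ⟨hvs, Or.inl hvn⟩
      | tail hab hstep ih =>
        obtain ⟨hsig, hle, hor⟩ := step_pres hn ih.1 hstep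
        refine ⟨hsig, ?_⟩
        rcases ih.2 with h1 | h1
        · rcases hor with h2 | ⟨h2, h3, h4⟩
          · exact Or.inl (by omega)
          · right
            have h5 : _ ≠ (-1 : ℤ) := fun hc => h4 ⟨h1, hc⟩
            omega
        · right; omega
    have := (main u h).2
    omega
  · intro h
    have main : ∀ w : Equiv.Perm ℤ, BruhatLE_D n u w →
        IsSignedPerm n w ∧ w (n : ℤ) < 0 := by
      intro w hw
      unfold BruhatLE_D at hw
      induction hw with
      | refl => exact ⟨hus, by omega⟩
      | tail hab hstep ih =>
        obtain ⟨hsig, hle, _⟩ := step_pres hn ih.1 hstep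
        exact ⟨hsig, by omega⟩
    have := (main v h).2
    omega
end

section
/- Every symmetric (2,2n-2)-clan (a string of length 2n) satisfies exactly one of: (a) it consists of 2 plus signs and 2n-2 minus signs; (b) it consists of 2 pairs of matching natural numbers and 2n-4 minus signs, with the numbers forming one of the patterns (1,1,2,2), (1,2,1,2), or (1,2,2,1). In particular, no symmetric (2,2n-2)-clan contains exactly one pair of matching numbers. -/
/-- A clan of length `N`: each position carries a sign (`some true` = `+`,
`some false` = `-`) or is numeric (`none`), and the numeric positions are
matched in pairs by the fixed-point-free (on numeric positions) involution
`mate`.  Identifying clans up to renaming of the natural numbers, only this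
matching matters. -/
structure Clan (N : ℕ) where
  sign : Fin N → Option Bool
  mate : Fin N → Fin N
  mate_invol : ∀ i, mate (mate i) = i
  mate_fix : ∀ i, sign i ≠ none → mate i = i
  mate_ne : ∀ i, sign i = none → mate i ≠ i

/-- The set of positions of `+` signs. -/
def Clan.plusSet {N : ℕ} (γ : Clan N) : Finset (Fin N) :=
  Finset.univ.filter (fun i => γ.sign i = some true)

/-- The set of positions of `-` signs. -/
def Clan.minusSet {N : ℕ} (γ : Clan N) : Finset (Fin N) :=
  Finset.univ.filter (fun i => γ.sign i = some false)

/-- The set of numeric positions. -/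
def Clan.numSet {N : ℕ} (γ : Clan N) : Finset (Fin N) :=
  Finset.univ.filter (fun i => γ.sign i = none)

/-- A clan is a `(2,q)`-clan when `#(+) - #(-) = 2 - q`. -/
def IsClan2 (q : ℕ) {N : ℕ} (γ : Clan N) : Prop :=
  (γ.plusSet.card : ℤ) - (γ.minusSet.card : ℤ) = 2 - (q : ℤ)

/-- A clan is symmetric if reversing its string of characters gives the same
clan: signs are preserved under `i ↦ N+1-i` and matched pairs go to matched
pairs. -/
def Clan.IsSymmetric {N : ℕ} (γ : Clan N) : Prop :=
  (∀ i, γ.sign i.rev = γ.sign i) ∧ ∀ i, γ.mate i.rev = (γ.mate i).rev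

/-- Type (a) symmetric `(2,2n-2)`-clan: 2 plus signs and `2n-2` minus signs. -/
def TypeA_evenLen (n : ℕ) (γ : Clan (2 * n)) : Prop :=
  γ.plusSet.card = 2 ∧ γ.minusSet.card = 2 * n - 2 ∧ γ.numSet = ∅

/-- Type (b) symmetric `(2,2n-2)`-clan: 2 pairs of matching numbers and `2n-4`
minus signs, with the numbers in one of the patterns `(1,1,2,2)`, `(1,2,1,2)`,
`(1,2,2,1)`. -/
def TypeB_evenLen (n : ℕ) (γ : Clan (2 * n)) : Prop :=
  γ.plusSet.card = 0 ∧ γ.minusSet.card = 2 * n - 4 ∧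
    ∃ p1 p2 p3 p4 : Fin (2 * n), p1 < p2 ∧ p2 < p3 ∧ p3 < p4 ∧
      γ.numSet = {p1, p2, p3, p4} ∧
      ((γ.mate p1 = p2 ∧ γ.mate p3 = p4) ∨
       (γ.mate p1 = p3 ∧ γ.mate p2 = p4) ∨
       (γ.mate p1 = p4 ∧ γ.mate p2 = p3))


section Aux

variable {n : ℕ} (γ : Clan (2 * n))

lemma rev_ne_self (i : Fin (2 * n)) : i.rev ≠ i := by
  intro h
  have h2 := congrArg Fin.val h
  rw [Fin.val_rev] at h2
  have := i.isLt
  omega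

lemma card_partition : γ.plusSet.card + γ.minusSet.card + γ.numSet.card = 2 * n := by
  classical
  have hd1 : Disjoint γ.plusSet γ.minusSet := by
    simp only [Finset.disjoint_left, Clan.plusSet, Clan.minusSet, Finset.mem_filter,
      Finset.mem_univ, true_and]
    intro i h1 h2
    rw [h1] at h2
    simp at h2
  have hd2 : Disjoint (γ.plusSet ∪ γ.minusSet) γ.numSet := by
    simp only [Finset.disjoint_left, Clan.plusSet, Clan.minusSet, Clan.numSet,
      Finset.mem_union, Finset.mem_filter, Finset.mem_univ, true_and]
    rintro i (h1 | h1) h2 <;> rw [h1] at h2 <;> simp at h2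
  have he : γ.plusSet ∪ γ.minusSet ∪ γ.numSet = Finset.univ := by
    ext i
    simp only [Finset.mem_union, Clan.plusSet, Clan.minusSet, Clan.numSet,
      Finset.mem_filter, Finset.mem_univ, true_and, iff_true]
    rcases γ.sign i with _ | (_ | _) <;> simp
  have := congrArg Finset.card he
  rw [Finset.card_union_of_disjoint hd2, Finset.card_union_of_disjoint hd1,
    Finset.card_univ, Fintype.card_fin] at this
  exact this

lemma plus_card_ne_one (hsym : γ.IsSymmetric) : γ.plusSet.card ≠ 1 := by
  intro h
  obtain ⟨a, ha⟩ := Finset.card_eq_one.mp h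
  have ha1 : a ∈ γ.plusSet := ha ▸ Finset.mem_singleton_self a
  have ha2 : a.rev ∈ γ.plusSet := by
    simp only [Clan.plusSet, Finset.mem_filter, Finset.mem_univ, true_and] at ha1 ⊢
    rw [hsym.1 a, ha1]
  rw [ha, Finset.mem_singleton] at ha2
  exact rev_ne_self a ha2

lemma mate_num {i : Fin (2 * n)} (hi : γ.sign i = none) : γ.sign (γ.mate i) = none := by
  by_contra h
  have h1 := γ.mate_fix _ h
  have h2 := γ.mate_invol i
  rw [h1] at h2
  exact γ.mate_ne i hi h2

lemma mate_eq_symm {i j : Fin (2 * n)} (h : γ.mate i = j) : γ.mate j = i := by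
  rw [← h, γ.mate_invol]

end Aux

/-- every symmetric `(2,2n-2)`-clan is of exactly one of the
types (a), (b); in particular no such clan contains exactly one pair of
matching numbers. -/
theorem symm_clan_evenLen_dichotomy (n : ℕ) (hn : 2 ≤ n)
    (γ : Clan (2 * n)) (hsym : γ.IsSymmetric)
    (hclan : IsClan2 (2 * n - 2) γ) :
    (TypeA_evenLen n γ ∨ TypeB_evenLen n γ) ∧
    ¬ (TypeA_evenLen n γ ∧ TypeB_evenLen n γ) ∧
    γ.numSet.card ≠ 2 := by
  classical
  have hnum : ∀ i ∈ γ.numSet, γ.sign i = none := by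
    intro i hi
    simpa [Clan.numSet] using hi
  have hpart := card_partition γ
  have hcast : ((2 * n - 2 : ℕ) : ℤ) = 2 * n - 2 := by
    have : 2 ≤ 2 * n := by omega
    push_cast [Nat.cast_sub this]
    ring
  rw [IsClan2, hcast] at hclan
  have hP1 := plus_card_ne_one γ hsym
  have key : 2 * γ.plusSet.card + γ.numSet.card = 4 := by omega
  have hPcases : γ.plusSet.card = 0 ∨ γ.plusSet.card = 2 := by omega
  refine ⟨?_, ?_, by omega⟩
  · rcases hPcases with hP | hP
    · -- Type B
      right
      have hK : γ.numSet.card = 4 := by omega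
      refine ⟨hP, by omega, ?_⟩
      let e := γ.numSet.orderIsoOfFin hK
      set p1 := (e 0 : Fin (2 * n)) with hp1
      set p2 := (e 1 : Fin (2 * n)) with hp2
      set p3 := (e 2 : Fin (2 * n)) with hp3
      set p4 := (e 3 : Fin (2 * n)) with hp4
      have hlt : ∀ i j : Fin 4, i < j → (e i : Fin (2 * n)) < (e j : Fin (2 * n)) := by
        intro i j hij
        exact e.strictMono hij
      have h12 : p1 < p2 := hlt 0 1 (by decide)
      have h23 : p2 < p3 := hlt 1 2 (by decide)
      have h34 : p3 < p4 := hlt 2 3 (by decide)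
      have hmem : ∀ i : Fin 4, (e i : Fin (2 * n)) ∈ γ.numSet := fun i => (e i).2
      have hset : γ.numSet = {p1, p2, p3, p4} := by
        apply (Finset.eq_of_subset_of_card_le ?_ ?_).symm
        · intro x hx
          simp only [Finset.mem_insert, Finset.mem_singleton] at hx
          rcases hx with h | h | h | h <;> rw [h] <;> exact hmem _
        · rw [hK]
          have c1 : ({p1, p2, p3, p4} : Finset (Fin (2 * n))).card = 4 := by
            rw [Finset.card_insert_of_notMem (by
                simp only [Finset.mem_insert, Finset.mem_singleton]
                push_neg
                exact ⟨ne_of_lt h12, ne_of_lt (h12.trans h23),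
                  ne_of_lt ((h12.trans h23).trans h34)⟩),
              Finset.card_insert_of_notMem (by
                simp only [Finset.mem_insert, Finset.mem_singleton]
                push_neg
                exact ⟨ne_of_lt h23, ne_of_lt (h23.trans h34)⟩),
              Finset.card_insert_of_notMem (by
                simp only [Finset.mem_singleton]
                exact ne_of_lt h34),
              Finset.card_singleton]
          omega
      refine ⟨p1, p2, p3, p4, h12, h23, h34, hset, ?_⟩
      have hmem' : ∀ i : Fin 4, γ.sign (e i : Fin (2 * n)) = none := fun i =>
        hnum _ (hmem i)
      have hmateIn : ∀ x : Fin (2 * n), γ.sign x = none → γ.mate x ∈ γ.numSet := by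
        intro x hx
        simp [Clan.numSet, mate_num γ hx]
      have hm : ∀ x : Fin (2 * n), γ.sign x = none →
          γ.mate x = p1 ∨ γ.mate x = p2 ∨ γ.mate x = p3 ∨ γ.mate x = p4 := by
        intro x hx
        have := hmateIn x hx
        rw [hset] at this
        simpa using this
      have hne : ∀ x : Fin (2 * n), γ.sign x = none → γ.mate x ≠ x := fun x hx =>
        γ.mate_ne x hx
      have hs1 := hmem' 0
      have hs2 := hmem' 1
      have hs3 := hmem' 2
      have hs4 := hmem' 3
      -- case on mate p1
      rcases hm p1 hs1 with h1 | h1 | h1 | h1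
      · exact absurd h1 (hne p1 hs1)
      · -- mate p1 = p2, so mate p3 = p4
        left
        refine ⟨h1, ?_⟩
        rcases hm p3 hs3 with h3 | h3 | h3 | h3
        · exact absurd (mate_eq_symm γ h3) (by rw [h1]; exact ne_of_lt h23)
        · have := mate_eq_symm γ h3
          rw [mate_eq_symm γ h1] at this
          exact absurd this (ne_of_lt (h12.trans h23))
        · exact absurd h3 (hne p3 hs3)
        · exact h3
      · -- mate p1 = p3, so mate p2 = p4
        right; left
        refine ⟨h1, ?_⟩
        rcases hm p2 hs2 with h2 | h2 | h2 | h2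
        · exact absurd (mate_eq_symm γ h2) (by rw [h1]; exact (ne_of_lt h23).symm)
        · exact absurd h2 (hne p2 hs2)
        · have := mate_eq_symm γ h2
          rw [mate_eq_symm γ h1] at this
          exact absurd this (ne_of_lt h12)
        · exact h2
      · -- mate p1 = p4, so mate p2 = p3
        right; right
        refine ⟨h1, ?_⟩
        rcases hm p2 hs2 with h2 | h2 | h2 | h2
        · exact absurd (mate_eq_symm γ h2) (by rw [h1]; exact (ne_of_lt (h23.trans h34)).symm)
        · exact absurd h2 (hne p2 hs2)
        · exact h2
        · have := mate_eq_symm γ h2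
          rw [mate_eq_symm γ h1] at this
          exact absurd this (ne_of_lt h12)
    · -- Type A
      left
      refine ⟨hP, by omega, Finset.card_eq_zero.mp (by omega)⟩
  · rintro ⟨⟨hA, _, _⟩, ⟨hB, _, _⟩⟩
    rw [hA] at hB
    exact two_ne_zero hB
end
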